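/- Let K be a field of characteristic ≠ 2, h a positive integer, and k odd with 1 ≤ k ≤ 2h-1. Then the k-fold exterior power of h × H (h hyperbolic planes) is hyperbolic: Λᵏ(h × H) ≃ (1/2)·C(2h, k) × H. -/

import Mathlib

/-- `B'` is (a model of) the `k`-fold exterior power of the bilinear form `B`:
`W` has dimension `C(dim V, k)` and carries an alternating multilinear wedge map
whose image spans `W` and on which `B'` is given by the determinant pairing
`Λᵏφ(x₁∧...∧x_k, y₁∧...∧y_k) = det(φ(xᵢ, yⱼ))`. -/
def IsExteriorPower (K : Type*) [Field K] {V W : Type*} [AddCommGroup V] [Module K V]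
    [AddCommGroup W] [Module K W] (k : ℕ) (B : LinearMap.BilinForm K V)
    (B' : LinearMap.BilinForm K W) : Prop :=
  Module.finrank K W = (Module.finrank K V).choose k ∧
  ∃ w : AlternatingMap K V W (Fin k),
    Submodule.span K (Set.range fun v : Fin k → V => w v) = ⊤ ∧
    ∀ v u : Fin k → V, B' (w v) (w u) = Matrix.det (Matrix.of fun i j => B (v i) (u j))

private def pairEquiv (M : ℕ) : (Fin M ⊕ Fin M) ≃ Fin M × Fin 2 where
  toFun := Sum.elim (fun m => (m, 0)) (fun m => (m, 1))
  invFun := fun p => if p.2 = 0 then .inl p.1 else .inr p.1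
  left_inv := by rintro (m | m) <;> simp
  right_inv := by rintro ⟨m, j⟩; fin_cases j <;> simp

private theorem prod_pm {K : Type*} [Field K] {α : Type*} (d : α → K)
    (hd : ∀ p, d p = 1 ∨ d p = -1) (s : Finset α) :
    (∏ p ∈ s, d p) = 1 ∨ (∏ p ∈ s, d p) = -1 := by
  classical
  induction s using Finset.induction with
  | empty => simp
  | @insert a s hx ih =>
    rw [Finset.prod_insert hx]
    rcases hd a with h' | h' <;> rcases ih with h'' | h'' <;> simp [h', h'']

/-- Odd exterior powers of a hyperbolic form are hyperbolic:
`Λᵏ(h × ℍ) ≃ (1/2)·C(2h,k) × ℍ` for `k` odd, `1 ≤ k ≤ 2h-1`. -/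
theorem extPower_hyperbolic_odd (K : Type*) [Field K] (hchar : ringChar K ≠ 2)
    {V W : Type*} [AddCommGroup V] [Module K V] [AddCommGroup W] [Module K W]
    (h k : ℕ) (hh : 0 < h) (hkodd : Odd k) (hk1 : 1 ≤ k) (hk2 : k ≤ 2 * h - 1)
    (B : LinearMap.BilinForm K V) (bV : Module.Basis (Fin h × Fin 2) K V)
    (hdiag : ∀ p q, B (bV p) (bV q) =
      if p = q then (if p.2 = 0 then (1 : K) else -1) else 0)
    (B' : LinearMap.BilinForm K W) (hext : IsExteriorPower K k B B') :
    QuadraticMap.Equivalent (LinearMap.BilinMap.toQuadraticMap B')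
      (QuadraticMap.weightedSumSquares K
        (fun p : Fin ((2 * h).choose k / 2) × Fin 2 => if p.2 = 0 then (1 : K) else -1)) := by
  classical
  obtain ⟨hdim, w, -, hW⟩ := hext
  haveI : Invertible (2 : K) := invertibleOfRingCharNotDvd (fun hdvd => by
    rcases (Nat.dvd_prime Nat.prime_two).mp hdvd with h1 | h2
    · exact CharP.ringChar_ne_one h1
    · exact hchar h2)
  have two_ne : (2 : K) ≠ 0 := Invertible.ne_zero 2
  have hne : (1 : K) ≠ -1 := fun hx => two_ne (by linear_combination hx)
  -- reindex the basis by `Fin (2 * h)`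
  set eqv : (Fin h × Fin 2) ≃ Fin (2 * h) :=
    finProdFinEquiv.trans (finCongr (by ring)) with heqv
  set b2 : Module.Basis (Fin (2 * h)) K V := bV.reindex eqv with hb2
  set d0 : Fin h × Fin 2 → K := fun p => if p.2 = 0 then (1 : K) else -1 with hd0
  have hd0val : ∀ p, d0 p = 1 ∨ d0 p = -1 := fun p => by
    by_cases hp : p.2 = 0 <;> simp [hd0, hp]
  set d : Fin (2 * h) → K := fun i => d0 (eqv.symm i) with hd
  have hdval : ∀ i, d i = 1 ∨ d i = -1 := fun i => hd0val _
  have hdiag2 : ∀ i j, B (b2 i) (b2 j) = if i = j then d i else 0 := by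
    intro i j
    rw [hb2, Module.Basis.reindex_apply, Module.Basis.reindex_apply, hdiag, hd]
    by_cases hij : i = j
    · subst hij; simp [hd0]
    · rw [if_neg hij, if_neg (fun hc => hij (eqv.symm.injective hc))]
  set ι := {S : Finset (Fin (2 * h)) // S.card = k} with hι
  set ε : ι → K := fun S => ∏ p ∈ S.1, d p with hε
  have hεval : ∀ S, ε S = 1 ∨ ε S = -1 := fun S => prod_pm d hdval S.1
  have hεne : ∀ S, ε S ≠ 0 := fun S => by
    rcases hεval S with h' | h' <;> rw [h'] <;> intro hc <;> simp at hc
  set e : ι → W := fun S => w fun i => b2 ((S.1.orderIsoOfFin S.2) i) with he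
  -- Gram matrix is diagonal
  have gram : ∀ S T : ι, B' (e S) (e T) = if S = T then ε S else 0 := by
    intro S T
    rw [he, hW]
    by_cases hST : S = T
    · subst hST
      rw [if_pos rfl]
      have hdiagm : (Matrix.of fun i j =>
          B (b2 ((S.1.orderIsoOfFin S.2) i)) (b2 ((S.1.orderIsoOfFin S.2) j)))
          = Matrix.diagonal (fun i => d ((S.1.orderIsoOfFin S.2) i)) := by
        ext i j
        by_cases hij : i = j
        · subst hij; simp [hdiag2]
        · have hc : ((S.1.orderIsoOfFin S.2) i : Fin (2 * h))
              ≠ ((S.1.orderIsoOfFin S.2) j : Fin (2 * h)) := by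
            intro hc
            exact hij ((S.1.orderIsoOfFin S.2).injective (Subtype.coe_injective hc))
          simp [hdiag2, hc, Matrix.diagonal, hij]
      rw [hdiagm, Matrix.det_diagonal]
      show _ = ∏ p ∈ S.1, d p
      rw [← Finset.prod_coe_sort S.1 d]
      exact Fintype.prod_equiv (S.1.orderIsoOfFin S.2).toEquiv _ _ (fun i => rfl)
    · rw [if_neg hST]
      have hnsub : ¬ S.1 ⊆ T.1 := fun hsub =>
        hST (Subtype.ext (Finset.eq_of_subset_of_card_le hsub (le_of_eq (T.2.trans S.2.symm))))
      obtain ⟨p, hpS, hpT⟩ := Finset.not_subset.mp hnsub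
      obtain ⟨i₀, hi₀⟩ := (S.1.orderIsoOfFin S.2).surjective ⟨p, hpS⟩
      apply Matrix.det_eq_zero_of_row_eq_zero i₀
      intro j
      have h2 : ((T.1.orderIsoOfFin T.2) j : Fin (2 * h)) ∈ T.1 :=
        ((T.1.orderIsoOfFin T.2) j).2
      have hne' : ((S.1.orderIsoOfFin S.2) i₀ : Fin (2 * h))
          ≠ ((T.1.orderIsoOfFin T.2) j : Fin (2 * h)) := by
        rw [hi₀]
        intro hc
        have hpc : p = ((T.1.orderIsoOfFin T.2) j : Fin (2 * h)) := hc
        exact hpT (hpc ▸ h2)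
      show B (b2 ((S.1.orderIsoOfFin S.2) i₀)) (b2 ((T.1.orderIsoOfFin T.2) j)) = 0
      rw [hdiag2, if_neg hne']
  -- e is linearly independent, and a basis by dimension count
  have hli : LinearIndependent K e := by
    rw [Fintype.linearIndependent_iff]
    intro g hg T
    have hB : B' (∑ S, g S • e S) (e T) = 0 := by rw [hg]; simp
    rw [map_sum, LinearMap.sum_apply] at hB
    simp only [map_smul, LinearMap.smul_apply, smul_eq_mul, gram, mul_ite, mul_zero] at hB
    rw [Finset.sum_ite_eq' Finset.univ T (fun S => g S * ε S)] at hB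
    simp only [Finset.mem_univ, if_true] at hB
    exact (mul_eq_zero.mp hB).resolve_right (hεne T)
  have hki : k ≤ 2 * h := le_trans hk2 (Nat.sub_le _ _)
  haveI : Nonempty ι := by
    obtain ⟨B0, -, hB0⟩ := Finset.exists_subset_card_eq
      (s := (Finset.univ : Finset (Fin (2 * h)))) (n := k)
      (by rw [Finset.card_univ, Fintype.card_fin]; exact hki)
    exact ⟨⟨B0, hB0⟩⟩
  have hcardι : Fintype.card ι = (2 * h).choose k :=
    (Fintype.card_finset_len k).trans (by rw [Fintype.card_fin])
  have hcard : Fintype.card ι = Module.finrank K W := by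
    rw [hcardι, hdim, Module.finrank_eq_card_basis bV, Fintype.card_prod,
      Fintype.card_fin, Fintype.card_fin, mul_comm]
  set bW := basisOfLinearIndependentOfCardEqFinrank hli hcard with hbW
  have hbWc : ⇑bW = e := coe_basisOfLinearIndependentOfCardEqFinrank hli hcard
  set Q := LinearMap.BilinMap.toQuadraticMap B' with hQ
  have horth : (QuadraticMap.associated (R := K) Q).IsOrthoᵢ bW := by
    intro i j hij
    have h3 : QuadraticMap.associated (R := K) Q (bW i) (bW j)
        = ⅟ (2 : Module.End K K) • (B' (bW i) (bW j) + B' (bW j) (bW i)) :=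
      QuadraticMap.associated_toQuadraticMap K B' (bW i) (bW j)
    show QuadraticMap.associated (R := K) Q (bW i) (bW j) = 0
    rw [h3, hbWc, gram, gram, if_neg hij, if_neg (Ne.symm hij)]
    simp
  have hQe : (fun S => Q (bW S)) = ε := by
    funext S
    rw [hbWc, hQ, LinearMap.BilinMap.toQuadraticMap_apply, gram, if_pos rfl]
  have eq1 : QuadraticMap.Equivalent Q (QuadraticMap.weightedSumSquares K ε) := by
    have iso := QuadraticMap.isometryEquivBasisRepr Q bW
    rw [QuadraticMap.basisRepr_eq_of_iIsOrtho Q bW horth, hQe] at iso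
    exact ⟨iso⟩
  -- counting: the flip involution pairs up positive and negative indices
  set M := (2 * h).choose k / 2 with hM
  set flip0 : (Fin h × Fin 2) ≃ (Fin h × Fin 2) :=
    Equiv.prodCongr (Equiv.refl _) (Equiv.swap 0 1) with hflip0
  have hflip0d : ∀ p, d0 (flip0 p) = - d0 p := by
    rintro ⟨a, b⟩; fin_cases b <;> simp [hflip0, hd0]
  set flip : Fin (2 * h) ≃ Fin (2 * h) := (eqv.symm.trans flip0).trans eqv with hflip
  have hflipd : ∀ i, d (flip i) = - d i := by
    intro i
    rw [hd, hflip]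
    simp only [Equiv.trans_apply, Equiv.symm_apply_apply]
    exact hflip0d _
  set F : ι → ι := fun S => ⟨S.1.map flip.toEmbedding, by rw [Finset.card_map]; exact S.2⟩
    with hF
  have hflipinv : ∀ x, flip (flip x) = x := by
    intro x
    rw [hflip]
    simp only [Equiv.trans_apply, Equiv.symm_apply_apply]
    have h0 : ∀ p, flip0 (flip0 p) = p := by
      rintro ⟨a, b⟩; fin_cases b <;> simp [hflip0]
    rw [h0, Equiv.apply_symm_apply]
  have hFF : ∀ S, F (F S) = S := by
    intro S
    apply Subtype.ext
    have hemb : flip.toEmbedding.trans flip.toEmbedding = Function.Embedding.refl _ := by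
      ext x
      simp [hflipinv x]
    simp only [hF, Finset.map_map, hemb, Finset.map_refl]
  have hεF : ∀ S, ε (F S) = - ε S := by
    intro S
    show (∏ p ∈ S.1.map flip.toEmbedding, d p) = -ε S
    rw [Finset.prod_map]
    calc (∏ p ∈ S.1, d (flip.toEmbedding p)) = ∏ p ∈ S.1, (-1) * d p := by
          refine Finset.prod_congr rfl fun p _ => ?_
          rw [Equiv.coe_toEmbedding, hflipd]; ring
      _ = (-1) ^ S.1.card * ∏ p ∈ S.1, d p := by
          rw [Finset.prod_mul_distrib, Finset.prod_const]
      _ = - ε S := by rw [S.2, hkodd.neg_one_pow, hε]; ring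
  set pos := Finset.univ.filter (fun S : ι => ε S = 1) with hpos
  set neg := Finset.univ.filter (fun S : ι => ¬ ε S = 1) with hneg
  have hmemneg : ∀ S : ι, S ∈ neg ↔ ε S = -1 := by
    intro S
    simp only [hneg, Finset.mem_filter, Finset.mem_univ, true_and]
    constructor
    · intro h'; exact (hεval S).resolve_left h'
    · intro h' h1; exact hne (h1.symm.trans h')
  have hcards : pos.card = neg.card := by
    apply Finset.card_bij' (fun S _ => F S) (fun S _ => F S)
    · intro S hS
      rw [hmemneg, hεF]
      rw [hpos, Finset.mem_filter] at hS
      rw [hS.2]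
    · intro S hS
      rw [hpos, Finset.mem_filter]
      refine ⟨Finset.mem_univ _, ?_⟩
      rw [hmemneg] at hS
      rw [hεF, hS]; ring
    · intro S _; exact hFF S
    · intro S _; exact hFF S
  have hsplit : pos.card + neg.card = Fintype.card ι := by
    rw [hpos, hneg, Finset.card_filter_add_card_filter_not, Finset.card_univ]
  have hposM : pos.card = M := by rw [hM]; omega
  have hnegM : neg.card = M := by omega
  set ePos : {S : ι // ε S = 1} ≃ Fin M := Fintype.equivFinOfCardEq
    (by rw [Fintype.card_subtype]; exact hposM) with hePos
  set eNeg : {S : ι // ¬ ε S = 1} ≃ Fin M := Fintype.equivFinOfCardEq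
    (by rw [Fintype.card_subtype]; exact hnegM) with heNeg
  set σ : ι ≃ Fin M × Fin 2 :=
    ((Equiv.sumCompl (fun S => ε S = 1)).symm.trans
      (Equiv.sumCongr ePos eNeg)).trans (pairEquiv M) with hσ
  set tw : Fin M × Fin 2 → K := fun p => if p.2 = 0 then (1 : K) else -1 with htw
  have hcompat : ∀ S, tw (σ S) = ε S := by
    intro S
    by_cases hS : ε S = 1
    · have h1 : (Equiv.sumCompl (fun S => ε S = 1)).symm S = Sum.inl ⟨S, hS⟩ :=
        Equiv.sumCompl_symm_apply_of_pos (p := fun S => ε S = 1) (a := S) hS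
      simp [hσ, h1, pairEquiv, htw, hS]
    · have h1 : (Equiv.sumCompl (fun S => ε S = 1)).symm S = Sum.inr ⟨S, hS⟩ :=
        Equiv.sumCompl_symm_apply_of_neg (p := fun S => ε S = 1) (a := S) hS
      have h2 : ε S = -1 := (hεval S).resolve_left hS
      simp [hσ, h1, pairEquiv, htw, h2]
  have eq2 : QuadraticMap.Equivalent (QuadraticMap.weightedSumSquares K ε)
      (QuadraticMap.weightedSumSquares K tw) := by
    set f : (ι → K) ≃ₗ[K] ((Fin M × Fin 2) → K) :=
      LinearEquiv.piCongrLeft' K (fun _ => K) σ with hf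
    have hcomp : (QuadraticMap.weightedSumSquares K tw).comp (f : (ι → K) →ₗ[K] _)
        = QuadraticMap.weightedSumSquares K ε := by
      have key : ∀ x : ι → K, (∑ j : Fin M × Fin 2, tw j • (x (σ.symm j) * x (σ.symm j)))
          = ∑ S : ι, ε S • (x S * x S) := by
        intro x
        rw [← Equiv.sum_comp σ (fun j => tw j • (x (σ.symm j) * x (σ.symm j)))]
        refine Finset.sum_congr rfl fun S _ => ?_
        rw [Equiv.symm_apply_apply, hcompat]
      ext x
      rw [QuadraticMap.comp_apply, QuadraticMap.weightedSumSquares_apply,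
        QuadraticMap.weightedSumSquares_apply]
      exact key x
    have iso := QuadraticMap.isometryEquivOfCompLinearEquiv
      (QuadraticMap.weightedSumSquares K tw) f
    rw [hcomp] at iso
    exact ⟨iso.symm⟩
  exact eq1.trans eq2
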